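/- Let n ≥ r > 1. There is no constant C > 0 such that d(x,y) ≤ C ‖x x* − y y*‖₂ for all x, y ∈ ℂ^{n×r}, where d(x,y) = min_{U∈U(r)} ‖x − y U‖₂·‖x + y U‖₂ and ‖·‖₂ is the Frobenius norm. -/

import Mathlib

open Matrix Filter
open scoped ComplexOrder

/-- `Matrix.PosSemidef.sqrt` as it stood in Mathlib (Dec 2024); removed since. -/
noncomputable def Matrix.PosSemidef.sqrt {n 𝕜 : Type*} [Fintype n] [DecidableEq n] [RCLike 𝕜]
    {A : Matrix n n 𝕜} (hA : A.PosSemidef) : Matrix n n 𝕜 :=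
  hA.1.eigenvectorUnitary.1 * diagonal ((↑) ∘ (Real.sqrt ∘ hA.1.eigenvalues)) *
    (star hA.1.eigenvectorUnitary : Matrix n n 𝕜)

noncomputable def frob {p q : ℕ} (x : Matrix (Fin p) (Fin q) ℂ) : ℝ :=
  Real.sqrt (Matrix.trace (xᴴ * x)).re

noncomputable def rinner {p q : ℕ} (X Y : Matrix (Fin p) (Fin q) ℂ) : ℝ :=
  (Matrix.trace (Xᴴ * Y)).re

noncomputable def nuclear {p q : ℕ} (x : Matrix (Fin p) (Fin q) ℂ) : ℝ :=
  (Matrix.trace (Matrix.posSemidef_conjTranspose_mul_self x).sqrt).re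

noncomputable def theta {n r : ℕ} (x : Matrix (Fin n) (Fin r) ℂ) : Matrix (Fin n) (Fin n) ℂ :=
  (Matrix.posSemidef_self_mul_conjTranspose x).sqrt

noncomputable def psi {n r : ℕ} (x : Matrix (Fin n) (Fin r) ℂ) : Matrix (Fin n) (Fin n) ℂ :=
  frob x • theta x

noncomputable def Dmet {n r : ℕ} (x y : Matrix (Fin n) (Fin r) ℂ) : ℝ :=
  ⨅ U : Matrix.unitaryGroup (Fin r) ℂ, frob (x - y * (U : Matrix (Fin r) (Fin r) ℂ))

noncomputable def dmet {n r : ℕ} (x y : Matrix (Fin n) (Fin r) ℂ) : ℝ :=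
  ⨅ U : Matrix.unitaryGroup (Fin r) ℂ,
    frob (x - y * (U : Matrix (Fin r) (Fin r) ℂ)) * frob (x + y * (U : Matrix (Fin r) (Fin r) ℂ))

/-- The Frobenius norm is the square root of the sum of squared entry magnitudes. -/
lemma frob_eq_sqrt_sum {p q : ℕ} (M : Matrix (Fin p) (Fin q) ℂ) :
    frob M = Real.sqrt (∑ j, ∑ i, Complex.normSq (M i j)) := by
  unfold frob
  congr 1
  simp [Matrix.trace, Matrix.diag, Matrix.mul_apply, Complex.re_sum,
    ← Complex.normSq_eq_conj_mul_self]

lemma frob_nonneg {p q : ℕ} (M : Matrix (Fin p) (Fin q) ℂ) : 0 ≤ frob M :=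
  Real.sqrt_nonneg _

/-- Every entry's absolute value is at most the Frobenius norm. -/
lemma abs_entry_le_frob {p q : ℕ} (M : Matrix (Fin p) (Fin q) ℂ) (i : Fin p) (j : Fin q) :
    ‖M i j‖ ≤ frob M := by
  rw [frob_eq_sqrt_sum]
  have h1 : Complex.normSq (M i j) ≤ ∑ j', ∑ i', Complex.normSq (M i' j') := by
    calc Complex.normSq (M i j) ≤ ∑ i', Complex.normSq (M i' j) :=
          Finset.single_le_sum (f := fun i' => Complex.normSq (M i' j))
            (fun _ _ => Complex.normSq_nonneg _) (Finset.mem_univ i)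
      _ ≤ _ := Finset.single_le_sum (f := fun j' => ∑ i', Complex.normSq (M i' j'))
          (fun _ _ => Finset.sum_nonneg fun _ _ => Complex.normSq_nonneg _) (Finset.mem_univ j)
  calc ‖M i j‖ = Real.sqrt (Complex.normSq (M i j)) := Complex.norm_def _
    _ ≤ _ := Real.sqrt_le_sqrt h1

/-- The Frobenius norm of a single-entry matrix. -/
lemma frob_Matrix.single {p q : ℕ} (a : Fin p) (b : Fin q) (c : ℂ) :
    frob (Matrix.single a b c) = ‖c‖ := by
  rw [frob_eq_sqrt_sum]
  have hs : (∑ j, ∑ i, Complex.normSq (Matrix.single a b c i j)) = Complex.normSq c := by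
    simp [Matrix.single, ite_and, apply_ite Complex.normSq, Finset.sum_ite_eq]
  rw [hs, Complex.norm_def]

/-- The key matrix identity for the counterexample pair. -/
lemma diff_eq_std {n r : ℕ} {i0 i1 : Fin n} {j0 j1 : Fin r} (h01n : i0 ≠ i1) (h01r : j0 ≠ j1)
    (ε : ℝ) :
    (Matrix.single i0 j0 1 + Matrix.single i1 j1 (ε : ℂ)) *
        (Matrix.single i0 j0 1 + Matrix.single i1 j1 (ε : ℂ))ᴴ -
      Matrix.single i0 j0 (1 : ℂ) * (Matrix.single i0 j0 (1 : ℂ))ᴴ =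
    Matrix.single i1 i1 ((ε : ℂ) * (ε : ℂ)) := by
  ext i j
  simp only [Matrix.sub_apply, Matrix.mul_apply, Matrix.add_apply,
    conjTranspose_apply, Matrix.single, of_apply, ite_and, apply_ite star, mul_ite, ite_mul,
    star_one, star_zero, Complex.star_def, Complex.conj_ofReal, mul_one, mul_zero, one_mul,
    zero_mul]
  by_cases h1 : i0 = i <;> by_cases h2 : i1 = i <;> by_cases h3 : i0 = j <;>
      by_cases h4 : i1 = j <;>
    simp_all [add_mul, mul_add, Finset.sum_add_distrib, ite_mul, mul_ite, ← ite_and,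
      Finset.sum_ite_eq, and_comm, h01r, Ne.symm h01r] <;>
    exact Finset.sum_eq_zero fun k _ =>
      if_neg (by rintro ⟨rfl, hh⟩; first | exact h01r hh | exact h01r hh.symm)

/-- for `n ≥ r > 1` there is no constant `C > 0` such that
`d(x,y) ≤ C ‖x x* − y y*‖₂` for all `x, y ∈ ℂ^{n×r}`. -/
theorem no_global_dmet_frobenius_bound (n r : ℕ) (hr : 1 < r) (hnr : r ≤ n) :
    ¬ ∃ C : ℝ, 0 < C ∧ ∀ x y : Matrix (Fin n) (Fin r) ℂ,
      dmet x y ≤ C * frob (x * xᴴ - y * yᴴ) := by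
  rintro ⟨C, hC, h⟩
  set ε : ℝ := 1 / (2 * C) with hε
  have hεpos : 0 < ε := by positivity
  have hn : 1 < n := lt_of_lt_of_le hr hnr
  set i0 : Fin n := ⟨0, by omega⟩ with hi0
  set i1 : Fin n := ⟨1, hn⟩ with hi1
  set j0 : Fin r := ⟨0, by omega⟩ with hj0
  set j1 : Fin r := ⟨1, hr⟩ with hj1
  have h01n : i0 ≠ i1 := by simp [hi0, hi1, Fin.ext_iff]
  have h01r : j0 ≠ j1 := by simp [hj0, hj1, Fin.ext_iff]
  set x : Matrix (Fin n) (Fin r) ℂ :=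
    Matrix.single i0 j0 1 + Matrix.single i1 j1 (ε : ℂ) with hx
  set y : Matrix (Fin n) (Fin r) ℂ := Matrix.single i0 j0 1 with hy
  -- the right-hand side
  have hdiff : x * xᴴ - y * yᴴ = Matrix.single i1 i1 ((ε : ℂ) * (ε : ℂ)) :=
    diff_eq_std h01n h01r ε
  have hRHS : frob (x * xᴴ - y * yᴴ) = ε * ε := by
    rw [hdiff, frob_Matrix.single, ← Complex.ofReal_mul, Complex.norm_real, Real.norm_eq_abs,
      abs_of_pos (by positivity)]
  -- the lower bound for dmet
  have hlb : ε ≤ dmet x y := by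
    unfold dmet
    apply le_ciInf
    intro U
    set V : Matrix (Fin r) (Fin r) ℂ := (U : Matrix (Fin r) (Fin r) ℂ) with hV
    set u : ℂ := V j0 j0 with hu
    have hx11 : x i1 j1 = (ε : ℂ) := by
      simp [hx, hy, Matrix.single, h01r]
    have hx00 : x i0 j0 = 1 := by
      simp [hx, hy, Matrix.single, Ne.symm h01r]
    have hyU1 : (y * V) i1 j1 = 0 := by
      simp [hy, Matrix.mul_apply, Matrix.single, ite_and, h01n]
    have hyU0 : (y * V) i0 j0 = u := by
      simp [hy, hu, Matrix.mul_apply, Matrix.single, ite_and, ite_mul, Finset.sum_ite_eq]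
    have e1 : (x - y * V) i1 j1 = (ε : ℂ) := by
      simp [Matrix.sub_apply, hx11, hyU1]
    have e2 : (x + y * V) i1 j1 = (ε : ℂ) := by
      simp [Matrix.add_apply, hx11, hyU1]
    have e3 : (x - y * V) i0 j0 = 1 - u := by
      simp [Matrix.sub_apply, hx00, hyU0]
    have e4 : (x + y * V) i0 j0 = 1 + u := by
      simp [Matrix.add_apply, hx00, hyU0]
    have ha1 : ε ≤ frob (x - y * V) := by
      have := abs_entry_le_frob (x - y * V) i1 j1
      rw [e1] at this
      simpa [abs_of_pos hεpos] using this
    have ha2 : ε ≤ frob (x + y * V) := by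
      have := abs_entry_le_frob (x + y * V) i1 j1
      rw [e2] at this
      simpa [abs_of_pos hεpos] using this
    have hb1 : ‖1 - u‖ ≤ frob (x - y * V) := by
      have := abs_entry_le_frob (x - y * V) i0 j0
      rwa [e3] at this
    have hb2 : ‖1 + u‖ ≤ frob (x + y * V) := by
      have := abs_entry_le_frob (x + y * V) i0 j0
      rwa [e4] at this
    have key : (2 : ℝ) ≤ ‖1 - u‖ + ‖1 + u‖ := by
      have e : (1 - u) + (1 + u) = 2 := by ring
      calc (2 : ℝ) = ‖(1 - u) + (1 + u)‖ := by rw [e]; simp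
        _ ≤ _ := norm_add_le _ _
    rcases le_or_gt 1 (‖1 - u‖) with hcase | hcase
    · have hA : (1 : ℝ) ≤ frob (x - y * V) := le_trans hcase hb1
      calc ε = 1 * ε := (one_mul ε).symm
        _ ≤ frob (x - y * V) * frob (x + y * V) :=
            mul_le_mul hA ha2 (le_of_lt hεpos) (le_trans zero_le_one hA)
    · have hcase' : (1 : ℝ) ≤ ‖1 + u‖ := by linarith
      have hA : (1 : ℝ) ≤ frob (x + y * V) := le_trans hcase' hb2
      calc ε = ε * 1 := (mul_one ε).symm
        _ ≤ frob (x - y * V) * frob (x + y * V) :=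
            mul_le_mul ha1 hA zero_le_one (frob_nonneg _)
  -- contradiction
  have hfin : ε ≤ C * (ε * ε) := by
    have := h x y
    rw [hRHS] at this
    exact le_trans hlb this
  have hCε : C * ε = 1 / 2 := by
    rw [hε]
    field_simp
  nlinarith [hεpos, hfin, hCε]
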